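/- (Configurational/Eshelby balance, Corollary 4, stated for a finite-dimensional linear order-parameter space M = ℝᵏ.) Let k ∈ ℕ, let B₀ ⊆ ℝ³ be open, T > 0, and let 𝓛 : ℝ³ × ℝ³ × ℝ³ × L(ℝ³,ℝ³) × ℝᵏ × ℝᵏ × L(ℝ³,ℝᵏ) → ℝ be twice continuously differentiable. Let x̃ : B₀ × (0,T) → ℝ³ and ν̃ : B₀ × (0,T) → ℝᵏ be twice continuously differentiable, write j(X,t) = (X, x̃, ẋ, F, ν̃, ν̇, N) with ẋ = ∂ₜx̃, F = ∇x̃, ν̇ = ∂ₜν̃, N = ∇ν̃, and assume they satisfy the Euler–Lagrange equations ∂ₜ(∂_{ẋ}𝓛∘j) = ∂_x𝓛∘j − Div(∂_F𝓛∘j) and ∂ₜ(∂_{ν̇}𝓛∘j) = ∂_ν𝓛∘j − Div(∂_N𝓛∘j) on B₀ × (0,T). Then the pointwise configurational balance holds: ∂ₜ( Fᵀ(∂_{ẋ}𝓛∘j) + Nᵀ(∂_{ν̇}𝓛∘j) ) = Div( (𝓛∘j)·I − Fᵀ(∂_F𝓛∘j) − Nᵀ(∂_N𝓛∘j) ) −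 (∂_X𝓛)∘j, where I is the identity on ℝ³, ∂_X𝓛 denotes the explicit partial derivative of 𝓛 with respect to its first (referential-place) argument, Fᵀ and Nᵀ denote adjoints, and Div of a field of linear maps on ℝ³ is (Div S)_B = Σ_A ∂_{X_A} S_{BA}. The second-order tensor (𝓛∘j)·I − Fᵀ(∂_F𝓛∘j) − Nᵀ(∂_N𝓛∘j) is (up to the kinetic and external-potential terms) the modified Eshelby tensor ℙ = ρ₀e·I − FᵀP − Nᵀ𝒮 for continua with substructure. -/

import Mathlib

open MeasureTheory

noncomputable section

/-- Referential place: `ℝ³`. -/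
abbrev V3 : Type := Fin 3 → ℝ

/-- The argument space of the Lagrangian density: `(X, x, ẋ, F, ν, ν̇, N)` with the
order-parameter space `M = ℝᵏ`, `F ∈ L(ℝ³,ℝ³)` and `N ∈ L(ℝ³,ℝᵏ)` given in
coordinates. -/
abbrev Arg (k : ℕ) : Type :=
  V3 × V3 × V3 × (Fin 3 → Fin 3 → ℝ) × (Fin k → ℝ) × (Fin k → ℝ) × (Fin k → Fin 3 → ℝ)

/-- Explicit partial derivative `∂_X 𝓛` (first slot). -/
def pdX {k : ℕ} (L : Arg k → ℝ) (a : Arg k) : V3 :=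
  fun A => fderiv ℝ L a (Pi.single A 1, 0, 0, 0, 0, 0, 0)

/-- Partial derivative `∂_x 𝓛` (second slot). -/
def pdx {k : ℕ} (L : Arg k → ℝ) (a : Arg k) : V3 :=
  fun i => fderiv ℝ L a (0, Pi.single i 1, 0, 0, 0, 0, 0)

/-- Partial derivative `∂_ẋ 𝓛` (third slot). -/
def pdv {k : ℕ} (L : Arg k → ℝ) (a : Arg k) : V3 :=
  fun i => fderiv ℝ L a (0, 0, Pi.single i 1, 0, 0, 0, 0)

/-- Partial derivative `∂_F 𝓛` (fourth slot), as a two-point tensor `(∂_F 𝓛)_{iA}`. -/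
def pdF {k : ℕ} (L : Arg k → ℝ) (a : Arg k) : Fin 3 → Fin 3 → ℝ :=
  fun i A => fderiv ℝ L a (0, 0, 0, Pi.single i (Pi.single A 1), 0, 0, 0)

/-- Partial derivative `∂_ν 𝓛` (fifth slot). -/
def pdnu {k : ℕ} (L : Arg k → ℝ) (a : Arg k) : Fin k → ℝ :=
  fun α => fderiv ℝ L a (0, 0, 0, 0, Pi.single α 1, 0, 0)

/-- Partial derivative `∂_ν̇ 𝓛` (sixth slot). -/
def pdnud {k : ℕ} (L : Arg k → ℝ) (a : Arg k) : Fin k → ℝ :=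
  fun α => fderiv ℝ L a (0, 0, 0, 0, 0, Pi.single α 1, 0)

/-- Partial derivative `∂_N 𝓛` (seventh slot), `(∂_N 𝓛)_{αA}`. -/
def pdN {k : ℕ} (L : Arg k → ℝ) (a : Arg k) : Fin k → Fin 3 → ℝ :=
  fun α A => fderiv ℝ L a (0, 0, 0, 0, 0, 0, Pi.single α (Pi.single A 1))

/-- Spatial gradient `F = ∇x̃` of the placement field, `F_{iA} = ∂_{X_A} x̃_i`. -/
def gradPl (x : V3 → ℝ → V3) (X : V3) (t : ℝ) : Fin 3 → Fin 3 → ℝ :=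
  fun i A => fderiv ℝ (fun Y => x Y t) X (Pi.single A 1) i

/-- Spatial gradient `N = ∇ν̃` of the order-parameter field, `N_{αA} = ∂_{X_A} ν̃_α`. -/
def gradOp {k : ℕ} (ν : V3 → ℝ → (Fin k → ℝ)) (X : V3) (t : ℝ) : Fin k → Fin 3 → ℝ :=
  fun α A => fderiv ℝ (fun Y => ν Y t) X (Pi.single A 1) α

/-- The first jet `j(X,t) = (X, x̃, ẋ, F, ν̃, ν̇, N)` along the motion. -/
def jet {k : ℕ} (x : V3 → ℝ → V3) (ν : V3 → ℝ → (Fin k → ℝ)) (X : V3) (t : ℝ) :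
    Arg k :=
  (X, x X t, deriv (x X) t, gradPl x X t, ν X t, deriv (ν X) t, gradOp ν X t)

/-- Row-wise referential divergence of a field of linear maps,
`(Div S)_α = Σ_A ∂_{X_A} S_{αA}`. -/
def divg {m : ℕ} (S : V3 → (Fin m → Fin 3 → ℝ)) (X : V3) : Fin m → ℝ :=
  fun α => ∑ A : Fin 3, fderiv ℝ (fun Y => S Y α A) X (Pi.single A 1)

/-! ### Auxiliary lemmas -/

lemma decomp1 {n : ℕ} {E : Type*} [AddCommMonoid E] [Module ℝ E]
    (φ : (Fin n → ℝ) →ₗ[ℝ] E) (u : Fin n → ℝ) :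
    φ u = ∑ i, u i • φ (Pi.single i 1) := by
  conv_lhs => rw [← Finset.univ_sum_single u]
  rw [map_sum]
  refine Finset.sum_congr rfl fun i _ => ?_
  rw [← _root_.map_smul]
  congr 1
  rw [← Pi.single_smul, smul_eq_mul, mul_one]

lemma decomp2 {m n : ℕ} {E : Type*} [AddCommMonoid E] [Module ℝ E]
    (φ : (Fin m → Fin n → ℝ) →ₗ[ℝ] E) (u : Fin m → Fin n → ℝ) :
    φ u = ∑ i, ∑ A, u i A • φ (Pi.single i (Pi.single A 1)) := by
  conv_lhs => rw [← Finset.univ_sum_single u]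
  rw [map_sum]
  refine Finset.sum_congr rfl fun i _ => ?_
  have := decomp1 (φ.comp (LinearMap.single ℝ (fun _ : Fin m => Fin n → ℝ) i)) (u i)
  simpa using this

lemma arg_decomp {k : ℕ} (ℓ : Arg k →L[ℝ] ℝ) (a : Arg k) :
    ℓ a = (∑ A, a.1 A * ℓ (Pi.single A 1,0,0,0,0,0,0))
        + (∑ i, a.2.1 i * ℓ (0,Pi.single i 1,0,0,0,0,0))
        + (∑ i, a.2.2.1 i * ℓ (0,0,Pi.single i 1,0,0,0,0))
        + (∑ i, ∑ A, a.2.2.2.1 i A * ℓ (0,0,0,Pi.single i (Pi.single A 1),0,0,0))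
        + (∑ α, a.2.2.2.2.1 α * ℓ (0,0,0,0,Pi.single α 1,0,0))
        + (∑ α, a.2.2.2.2.2.1 α * ℓ (0,0,0,0,0,Pi.single α 1,0))
        + (∑ α, ∑ A, a.2.2.2.2.2.2 α A * ℓ (0,0,0,0,0,0,Pi.single α (Pi.single A 1))) := by
  obtain ⟨a1,a2,a3,a4,a5,a6,a7⟩ := a
  have h : (a1,a2,a3,a4,a5,a6,a7) =
      ((a1,0,0,0,0,0,0) : Arg k) + (0,a2,0,0,0,0,0) + (0,0,a3,0,0,0,0) + (0,0,0,a4,0,0,0)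
      + (0,0,0,0,a5,0,0) + (0,0,0,0,0,a6,0) + (0,0,0,0,0,0,a7) := by
    simp [Prod.ext_iff]
  conv_lhs => rw [h]
  rw [map_add, map_add, map_add, map_add, map_add, map_add]
  have e1 : ℓ ((a1,0,0,0,0,0,0) : Arg k) = ∑ A, a1 A * ℓ (Pi.single A 1,0,0,0,0,0,0) :=
    decomp1 (ℓ.toLinearMap.comp (LinearMap.inl ℝ V3 _)) a1
  have e2 : ℓ ((0,a2,0,0,0,0,0) : Arg k) = ∑ i, a2 i * ℓ (0,Pi.single i 1,0,0,0,0,0) :=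
    decomp1 (ℓ.toLinearMap.comp ((LinearMap.inr ℝ V3 _).comp (LinearMap.inl ℝ V3 _))) a2
  have e3 : ℓ ((0,0,a3,0,0,0,0) : Arg k) = ∑ i, a3 i * ℓ (0,0,Pi.single i 1,0,0,0,0) :=
    decomp1 (ℓ.toLinearMap.comp ((LinearMap.inr ℝ V3 _).comp
      ((LinearMap.inr ℝ V3 _).comp (LinearMap.inl ℝ V3 _)))) a3
  have e4 : ℓ ((0,0,0,a4,0,0,0) : Arg k)
      = ∑ i, ∑ A, a4 i A * ℓ (0,0,0,Pi.single i (Pi.single A 1),0,0,0) :=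
    decomp2 (ℓ.toLinearMap.comp ((LinearMap.inr ℝ V3 _).comp
      ((LinearMap.inr ℝ V3 _).comp ((LinearMap.inr ℝ V3 _).comp
        (LinearMap.inl ℝ (Fin 3 → Fin 3 → ℝ) _))))) a4
  have e5 : ℓ ((0,0,0,0,a5,0,0) : Arg k) = ∑ α, a5 α * ℓ (0,0,0,0,Pi.single α 1,0,0) :=
    decomp1 (ℓ.toLinearMap.comp ((LinearMap.inr ℝ V3 _).comp
      ((LinearMap.inr ℝ V3 _).comp ((LinearMap.inr ℝ V3 _).comp
        ((LinearMap.inr ℝ (Fin 3 → Fin 3 → ℝ) _).comp (LinearMap.inl ℝ (Fin k → ℝ) _)))))) a5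
  have e6 : ℓ ((0,0,0,0,0,a6,0) : Arg k) = ∑ α, a6 α * ℓ (0,0,0,0,0,Pi.single α 1,0) :=
    decomp1 (ℓ.toLinearMap.comp ((LinearMap.inr ℝ V3 _).comp
      ((LinearMap.inr ℝ V3 _).comp ((LinearMap.inr ℝ V3 _).comp
        ((LinearMap.inr ℝ (Fin 3 → Fin 3 → ℝ) _).comp ((LinearMap.inr ℝ (Fin k → ℝ) _).comp
          (LinearMap.inl ℝ (Fin k → ℝ) _))))))) a6
  have e7 : ℓ ((0,0,0,0,0,0,a7) : Arg k)
      = ∑ α, ∑ A, a7 α A * ℓ (0,0,0,0,0,0,Pi.single α (Pi.single A 1)) :=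
    decomp2 (ℓ.toLinearMap.comp ((LinearMap.inr ℝ V3 _).comp
      ((LinearMap.inr ℝ V3 _).comp ((LinearMap.inr ℝ V3 _).comp
        ((LinearMap.inr ℝ (Fin 3 → Fin 3 → ℝ) _).comp ((LinearMap.inr ℝ (Fin k → ℝ) _).comp
          (LinearMap.inr ℝ (Fin k → ℝ) _))))))) a7
  rw [e1, e2, e3, e4, e5, e6, e7]

section Slice
variable {E : Type*} [NormedAddCommGroup E] [NormedSpace ℝ E]

/-- inclusion `Y ↦ (Y, 0)` -/
noncomputable def inlV : V3 →L[ℝ] V3 × ℝ := (ContinuousLinearMap.id ℝ V3).prod 0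

@[simp] lemma inlV_apply (v : V3) : inlV v = (v, 0) := rfl

variable {U : Set (V3 × ℝ)} {h : V3 → ℝ → E}

lemma hfda (hU : IsOpen U) (hh : ContDiffOn ℝ 2 (fun p : V3 × ℝ => h p.1 p.2) U)
    {q : V3 × ℝ} (hq : q ∈ U) :
    HasFDerivAt (fun p : V3 × ℝ => h p.1 p.2) (fderiv ℝ (fun p : V3 × ℝ => h p.1 p.2) q) q :=
  ((hh.differentiableOn (by norm_num)).differentiableAt (hU.mem_nhds hq)).hasFDerivAt

lemma hfda' (hU : IsOpen U) (hh : ContDiffOn ℝ 2 (fun p : V3 × ℝ => h p.1 p.2) U)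
    {q : V3 × ℝ} (hq : q ∈ U) :
    HasFDerivAt (fderiv ℝ (fun p : V3 × ℝ => h p.1 p.2))
      (fderiv ℝ (fderiv ℝ (fun p : V3 × ℝ => h p.1 p.2)) q) q :=
  ((((hh.fderiv_of_isOpen (m := 1) hU (by norm_num))).differentiableOn
      one_ne_zero).differentiableAt (hU.mem_nhds hq)).hasFDerivAt

lemma hsymm (hU : IsOpen U) (hh : ContDiffOn ℝ 2 (fun p : V3 × ℝ => h p.1 p.2) U)
    {q : V3 × ℝ} (hq : q ∈ U) (u w : V3 × ℝ) :
    fderiv ℝ (fderiv ℝ (fun p : V3 × ℝ => h p.1 p.2)) q u w =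
    fderiv ℝ (fderiv ℝ (fun p : V3 × ℝ => h p.1 p.2)) q w u := by
  refine second_derivative_symmetric_of_eventually (f := fun p : V3 × ℝ => h p.1 p.2)
    ?_ (hfda' hU hh hq) u w
  filter_upwards [hU.mem_nhds hq] with r hr using hfda hU hh hr

lemma slice_t (hU : IsOpen U) (hh : ContDiffOn ℝ 2 (fun p : V3 × ℝ => h p.1 p.2) U)
    {Y : V3} {s : ℝ} (hq : (Y, s) ∈ U) :
    HasDerivAt (h Y) (fderiv ℝ (fun p : V3 × ℝ => h p.1 p.2) (Y, s) (0, 1)) s :=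
  (hfda hU hh hq).comp_hasDerivAt s ((hasDerivAt_const s Y).prodMk (hasDerivAt_id s))

lemma slice_Y (hU : IsOpen U) (hh : ContDiffOn ℝ 2 (fun p : V3 × ℝ => h p.1 p.2) U)
    {Y : V3} {s : ℝ} (hq : (Y, s) ∈ U) :
    HasFDerivAt (fun Z => h Z s)
      ((fderiv ℝ (fun p : V3 × ℝ => h p.1 p.2) (Y, s)).comp inlV) Y :=
  (hfda hU hh hq).comp (f := fun Z : V3 => (Z, s)) Y ((hasFDerivAt_id Y).prodMk (hasFDerivAt_const s Y))

end Slice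

/-! ### The jet as a differentiable function on space-time -/

section Jet
variable {k : ℕ}

def Jfun (x : V3 → ℝ → V3) (ν : V3 → ℝ → Fin k → ℝ) (q : V3 × ℝ) : Arg k :=
  (q.1, x q.1 q.2,
   fderiv ℝ (fun p : V3 × ℝ => x p.1 p.2) q (0, 1),
   fun i A => fderiv ℝ (fun p : V3 × ℝ => x p.1 p.2) q (Pi.single A 1, 0) i,
   ν q.1 q.2,
   fderiv ℝ (fun p : V3 × ℝ => ν p.1 p.2) q (0, 1),
   fun α A => fderiv ℝ (fun p : V3 × ℝ => ν p.1 p.2) q (Pi.single A 1, 0) α)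

def Jder (x : V3 → ℝ → V3) (ν : V3 → ℝ → Fin k → ℝ) (q : V3 × ℝ) :
    (V3 × ℝ) →L[ℝ] Arg k :=
  (ContinuousLinearMap.fst ℝ V3 ℝ).prod
   ((fderiv ℝ (fun p : V3 × ℝ => x p.1 p.2) q).prod
    (((ContinuousLinearMap.apply ℝ V3 ((0 : V3), (1:ℝ))).comp
        (fderiv ℝ (fderiv ℝ (fun p : V3 × ℝ => x p.1 p.2)) q)).prod
     ((ContinuousLinearMap.pi fun i : Fin 3 => ContinuousLinearMap.pi fun A : Fin 3 =>
        (ContinuousLinearMap.proj i).comp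
          ((ContinuousLinearMap.apply ℝ V3 ((Pi.single A 1 : V3), (0:ℝ))).comp
            (fderiv ℝ (fderiv ℝ (fun p : V3 × ℝ => x p.1 p.2)) q))).prod
      ((fderiv ℝ (fun p : V3 × ℝ => ν p.1 p.2) q).prod
       (((ContinuousLinearMap.apply ℝ (Fin k → ℝ) ((0 : V3), (1:ℝ))).comp
           (fderiv ℝ (fderiv ℝ (fun p : V3 × ℝ => ν p.1 p.2)) q)).prod
        (ContinuousLinearMap.pi fun α : Fin k => ContinuousLinearMap.pi fun A : Fin 3 =>
          (ContinuousLinearMap.proj α).comp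
            ((ContinuousLinearMap.apply ℝ (Fin k → ℝ) ((Pi.single A 1 : V3), (0:ℝ))).comp
              (fderiv ℝ (fderiv ℝ (fun p : V3 × ℝ => ν p.1 p.2)) q))))))))

lemma Jder_apply (x : V3 → ℝ → V3) (ν : V3 → ℝ → Fin k → ℝ) (q : V3 × ℝ) (u : V3 × ℝ) :
    Jder x ν q u =
      (u.1,
       fderiv ℝ (fun p : V3 × ℝ => x p.1 p.2) q u,
       fderiv ℝ (fderiv ℝ (fun p : V3 × ℝ => x p.1 p.2)) q u (0, 1),
       fun i A => fderiv ℝ (fderiv ℝ (fun p : V3 × ℝ => x p.1 p.2)) q u (Pi.single A 1, 0) i,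
       fderiv ℝ (fun p : V3 × ℝ => ν p.1 p.2) q u,
       fderiv ℝ (fderiv ℝ (fun p : V3 × ℝ => ν p.1 p.2)) q u (0, 1),
       fun α A => fderiv ℝ (fderiv ℝ (fun p : V3 × ℝ => ν p.1 p.2)) q u (Pi.single A 1, 0) α) :=
  rfl

variable {x : V3 → ℝ → V3} {ν : V3 → ℝ → Fin k → ℝ} {U : Set (V3 × ℝ)}

lemma hasFDerivAt_Jfun (hU : IsOpen U)
    (hx : ContDiffOn ℝ 2 (fun p : V3 × ℝ => x p.1 p.2) U)
    (hν : ContDiffOn ℝ 2 (fun p : V3 × ℝ => ν p.1 p.2) U)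
    {q : V3 × ℝ} (hq : q ∈ U) :
    HasFDerivAt (Jfun x ν) (Jder x ν q) q := by
  refine (hasFDerivAt_fst).prodMk ((hfda hU hx hq).prodMk (HasFDerivAt.prodMk ?_
    (HasFDerivAt.prodMk ?_ ((hfda hU hν hq).prodMk (HasFDerivAt.prodMk ?_ ?_)))))
  · exact (ContinuousLinearMap.apply ℝ V3 ((0:V3), (1:ℝ))).hasFDerivAt.comp q (hfda' hU hx hq)
  · refine hasFDerivAt_pi'.2 fun i => ?_
    rw [ContinuousLinearMap.proj_pi]
    refine hasFDerivAt_pi'.2 fun A => ?_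
    rw [ContinuousLinearMap.proj_pi]
    exact ((ContinuousLinearMap.proj i).comp
      (ContinuousLinearMap.apply ℝ V3 ((Pi.single A 1 : V3), (0:ℝ)))).hasFDerivAt.comp q
      (hfda' hU hx hq)
  · exact (ContinuousLinearMap.apply ℝ (Fin k → ℝ) ((0:V3), (1:ℝ))).hasFDerivAt.comp q
      (hfda' hU hν hq)
  · refine hasFDerivAt_pi'.2 fun α => ?_
    rw [ContinuousLinearMap.proj_pi]
    refine hasFDerivAt_pi'.2 fun A => ?_
    rw [ContinuousLinearMap.proj_pi]
    exact ((ContinuousLinearMap.proj α).comp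
      (ContinuousLinearMap.apply ℝ (Fin k → ℝ) ((Pi.single A 1 : V3), (0:ℝ)))).hasFDerivAt.comp q
      (hfda' hU hν hq)

lemma jet_eq_Jfun (hU : IsOpen U)
    (hx : ContDiffOn ℝ 2 (fun p : V3 × ℝ => x p.1 p.2) U)
    (hν : ContDiffOn ℝ 2 (fun p : V3 × ℝ => ν p.1 p.2) U)
    {Y : V3} {s : ℝ} (hq : (Y, s) ∈ U) :
    jet x ν Y s = Jfun x ν (Y, s) := by
  have h1 : deriv (x Y) s = fderiv ℝ (fun p : V3 × ℝ => x p.1 p.2) (Y, s) (0, 1) :=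
    (slice_t hU hx hq).deriv
  have h2 : fderiv ℝ (fun Z => x Z s) Y =
      (fderiv ℝ (fun p : V3 × ℝ => x p.1 p.2) (Y, s)).comp inlV :=
    (slice_Y hU hx hq).fderiv
  have h3 : deriv (ν Y) s = fderiv ℝ (fun p : V3 × ℝ => ν p.1 p.2) (Y, s) (0, 1) :=
    (slice_t hU hν hq).deriv
  have h4 : fderiv ℝ (fun Z => ν Z s) Y =
      (fderiv ℝ (fun p : V3 × ℝ => ν p.1 p.2) (Y, s)).comp inlV :=
    (slice_Y hU hν hq).fderiv
  unfold jet Jfun gradPl gradOp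
  rw [h1, h2, h3, h4]
  rfl

lemma gradPl_eq (hU : IsOpen U)
    (hx : ContDiffOn ℝ 2 (fun p : V3 × ℝ => x p.1 p.2) U)
    {Y : V3} {s : ℝ} (hq : (Y, s) ∈ U) :
    gradPl x Y s = fun i A => fderiv ℝ (fun p : V3 × ℝ => x p.1 p.2) (Y, s) (Pi.single A 1, 0) i := by
  have h2 : fderiv ℝ (fun Z => x Z s) Y =
      (fderiv ℝ (fun p : V3 × ℝ => x p.1 p.2) (Y, s)).comp inlV :=
    (slice_Y hU hx hq).fderiv
  unfold gradPl
  rw [h2]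
  rfl

lemma gradOp_eq (hU : IsOpen U)
    (hν : ContDiffOn ℝ 2 (fun p : V3 × ℝ => ν p.1 p.2) U)
    {Y : V3} {s : ℝ} (hq : (Y, s) ∈ U) :
    gradOp ν Y s = fun α A => fderiv ℝ (fun p : V3 × ℝ => ν p.1 p.2) (Y, s) (Pi.single A 1, 0) α := by
  have h4 : fderiv ℝ (fun Z => ν Z s) Y =
      (fderiv ℝ (fun p : V3 × ℝ => ν p.1 p.2) (Y, s)).comp inlV :=
    (slice_Y hU hν hq).fderiv
  unfold gradOp
  rw [h4]
  rfl

end Jet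


set_option maxHeartbeats 2000000 in
set_option maxRecDepth 16000 in
/-- **Corollary 4: configurational/Eshelby balance, `M = ℝᵏ`.**
If the motion `(x̃, ν̃)` satisfies the Euler–Lagrange equations for a `C²` Lagrangian
density `𝓛(X, x, ẋ, F, ν, ν̇, ∇ν)` on `B₀ × (0,T)`, then the pointwise configurational
balance holds there:
`∂ₜ(Fᵀ∂_ẋ𝓛 + Nᵀ∂_ν̇𝓛) = Div(𝓛·I − Fᵀ∂_F𝓛 − Nᵀ∂_N𝓛) − ∂_X𝓛`,
where `𝓛·I − Fᵀ∂_F𝓛 − Nᵀ∂_N𝓛` is (up to kinetic and external-potential terms) the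
modified Eshelby tensor `ℙ = ρ₀e·I − FᵀP − Nᵀ𝒮` for continua with substructure. -/
theorem configurational_balance_from_euler_lagrange
    (k : ℕ) (B₀ : Set V3) (hB₀ : IsOpen B₀) (T : ℝ) (hT : 0 < T)
    (L : Arg k → ℝ) (hL : ContDiff ℝ 2 L)
    (x : V3 → ℝ → V3) (ν : V3 → ℝ → (Fin k → ℝ))
    (hx : ContDiffOn ℝ 2 (fun p : V3 × ℝ => x p.1 p.2) (B₀ ×ˢ Set.Ioo 0 T))
    (hν : ContDiffOn ℝ 2 (fun p : V3 × ℝ => ν p.1 p.2) (B₀ ×ˢ Set.Ioo 0 T))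
    (hEL1 : ∀ X ∈ B₀, ∀ t ∈ Set.Ioo 0 T,
      deriv (fun s => pdv L (jet x ν X s)) t =
        pdx L (jet x ν X t) - divg (fun Y => pdF L (jet x ν Y t)) X)
    (hEL2 : ∀ X ∈ B₀, ∀ t ∈ Set.Ioo 0 T,
      deriv (fun s => pdnud L (jet x ν X s)) t =
        pdnu L (jet x ν X t) - divg (fun Y => pdN L (jet x ν Y t)) X) :
    ∀ X ∈ B₀, ∀ t ∈ Set.Ioo 0 T, ∀ B : Fin 3,
      deriv (fun s =>
          (∑ i : Fin 3, gradPl x X s i B * pdv L (jet x ν X s) i) +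
          (∑ α : Fin k, gradOp ν X s α B * pdnud L (jet x ν X s) α)) t =
        (∑ A : Fin 3, fderiv ℝ (fun Y =>
            L (jet x ν Y t) * (if B = A then (1:ℝ) else 0) -
            (∑ i : Fin 3, gradPl x Y t i B * pdF L (jet x ν Y t) i A) -
            (∑ α : Fin k, gradOp ν Y t α B * pdN L (jet x ν Y t) α A))
          X (Pi.single A 1)) -
        pdX L (jet x ν X t) B := by
  intro X hX t ht B
  have hU : IsOpen (B₀ ×ˢ Set.Ioo 0 T) := hB₀.prod isOpen_Ioo
  have hp : ((X, t) : V3 × ℝ) ∈ B₀ ×ˢ Set.Ioo 0 T := ⟨hX, ht⟩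
  set jp := jet x ν X t with hjpdef
  set F2 := fderiv ℝ (fderiv ℝ (fun p : V3 × ℝ => x p.1 p.2)) (X, t) with hF2def
  set G2 := fderiv ℝ (fderiv ℝ (fun p : V3 × ℝ => ν p.1 p.2)) (X, t) with hG2def
  set L2 := fderiv ℝ (fderiv ℝ L) jp with hL2def
  set Jp := Jder x ν (X, t) with hJpdef
  -- basic facts about L
  have hLd : ∀ a : Arg k, HasFDerivAt L (fderiv ℝ L a) a :=
    fun a => (hL.differentiable (by norm_num) a).hasFDerivAt
  have hLd' : HasFDerivAt (fderiv ℝ L) L2 jp :=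
    (((hL.fderiv_right (m := 1) (by norm_num)).differentiable one_ne_zero) jp).hasFDerivAt
  have hEval : ∀ c : Arg k, HasFDerivAt (fun b : Arg k => fderiv ℝ L b c)
      ((ContinuousLinearMap.apply ℝ ℝ c).comp L2) jp :=
    fun c => (ContinuousLinearMap.apply ℝ ℝ c).hasFDerivAt.comp jp hLd'
  -- jet derivatives
  have hcurve : HasDerivAt (fun s : ℝ => ((X, s) : V3 × ℝ)) (0, 1) t :=
    (hasDerivAt_const t X).prodMk (hasDerivAt_id t)
  have hmap : HasFDerivAt (fun Y : V3 => ((Y, t) : V3 × ℝ)) inlV X :=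
    (hasFDerivAt_id X).prodMk (hasFDerivAt_const t X)
  have hjet_t : HasDerivAt (fun s => jet x ν X s) (Jp (0, 1)) t := by
    have h0 : HasDerivAt (fun s => Jfun x ν (X, s)) (Jp (0, 1)) t :=
      (hasFDerivAt_Jfun hU hx hν hp).comp_hasDerivAt t hcurve
    refine h0.congr_of_eventuallyEq ?_
    filter_upwards [isOpen_Ioo.mem_nhds ht] with s hs using jet_eq_Jfun hU hx hν ⟨hX, hs⟩
  have hjet_Y : HasFDerivAt (fun Y => jet x ν Y t) (Jp.comp inlV) X := by
    have h0 := (hasFDerivAt_Jfun hU hx hν hp).comp X hmap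
    refine h0.congr_of_eventuallyEq ?_
    filter_upwards [hB₀.mem_nhds hX] with Y hY using jet_eq_Jfun hU hx hν ⟨hY, ht⟩
  -- time derivatives of the gradients
  have hF_t : ∀ i : Fin 3, HasDerivAt (fun s => gradPl x X s i B)
      (F2 (0, 1) (Pi.single B 1, 0) i) t := by
    intro i
    have hbase : HasDerivAt (fun s => fderiv ℝ (fun p : V3 × ℝ => x p.1 p.2) (X, s))
        (F2 (0, 1)) t := (hfda' hU hx hp).comp_hasDerivAt t hcurve
    have h1 : HasDerivAt (fun s => fderiv ℝ (fun p : V3 × ℝ => x p.1 p.2) (X, s)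
          (Pi.single B 1, 0) i) (F2 (0, 1) (Pi.single B 1, 0) i) t :=
      ((ContinuousLinearMap.proj i).comp
        (ContinuousLinearMap.apply ℝ V3 ((Pi.single B 1 : V3), (0:ℝ)))).hasFDerivAt.comp_hasDerivAt
          t hbase
    refine h1.congr_of_eventuallyEq ?_
    filter_upwards [isOpen_Ioo.mem_nhds ht] with s hs
    exact congrFun (congrFun (gradPl_eq hU hx ⟨hX, hs⟩) i) B
  have hN_t : ∀ α : Fin k, HasDerivAt (fun s => gradOp ν X s α B)
      (G2 (0, 1) (Pi.single B 1, 0) α) t := by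
    intro α
    have hbase : HasDerivAt (fun s => fderiv ℝ (fun p : V3 × ℝ => ν p.1 p.2) (X, s))
        (G2 (0, 1)) t := (hfda' hU hν hp).comp_hasDerivAt t hcurve
    have h1 : HasDerivAt (fun s => fderiv ℝ (fun p : V3 × ℝ => ν p.1 p.2) (X, s)
          (Pi.single B 1, 0) α) (G2 (0, 1) (Pi.single B 1, 0) α) t :=
      ((ContinuousLinearMap.proj α).comp
        (ContinuousLinearMap.apply ℝ (Fin k → ℝ) ((Pi.single B 1 : V3), (0:ℝ)))).hasFDerivAt.comp_hasDerivAt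
          t hbase
    refine h1.congr_of_eventuallyEq ?_
    filter_upwards [isOpen_Ioo.mem_nhds ht] with s hs
    exact congrFun (congrFun (gradOp_eq hU hν ⟨hX, hs⟩) α) B
  -- spatial derivatives of the gradients
  have hF_Y : ∀ i : Fin 3, HasFDerivAt (fun Y => gradPl x Y t i B)
      (((ContinuousLinearMap.proj i).comp
        (ContinuousLinearMap.apply ℝ V3 ((Pi.single B 1 : V3), (0:ℝ)))).comp (F2.comp inlV)) X := by
    intro i
    have hbase : HasFDerivAt (fun Y => fderiv ℝ (fun p : V3 × ℝ => x p.1 p.2) (Y, t))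
        (F2.comp inlV) X := (hfda' hU hx hp).comp X hmap
    have h1 := (((ContinuousLinearMap.proj i).comp
      (ContinuousLinearMap.apply ℝ V3 ((Pi.single B 1 : V3), (0:ℝ)))).hasFDerivAt).comp X hbase
    refine h1.congr_of_eventuallyEq ?_
    filter_upwards [hB₀.mem_nhds hX] with Y hY
    exact congrFun (congrFun (gradPl_eq hU hx ⟨hY, ht⟩) i) B
  have hN_Y : ∀ α : Fin k, HasFDerivAt (fun Y => gradOp ν Y t α B)
      (((ContinuousLinearMap.proj α).comp
        (ContinuousLinearMap.apply ℝ (Fin k → ℝ) ((Pi.single B 1 : V3), (0:ℝ)))).comp (G2.comp inlV)) X := by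
    intro α
    have hbase : HasFDerivAt (fun Y => fderiv ℝ (fun p : V3 × ℝ => ν p.1 p.2) (Y, t))
        (G2.comp inlV) X := (hfda' hU hν hp).comp X hmap
    have h1 := (((ContinuousLinearMap.proj α).comp
      (ContinuousLinearMap.apply ℝ (Fin k → ℝ) ((Pi.single B 1 : V3), (0:ℝ)))).hasFDerivAt).comp X hbase
    refine h1.congr_of_eventuallyEq ?_
    filter_upwards [hB₀.mem_nhds hX] with Y hY
    exact congrFun (congrFun (gradOp_eq hU hν ⟨hY, ht⟩) α) B
  -- time derivatives of pdv, pdnud along the jet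
  have hpdv_t : ∀ i : Fin 3, HasDerivAt (fun s => pdv L (jet x ν X s) i)
      (L2 (Jp (0, 1)) (0, 0, Pi.single i 1, 0, 0, 0, 0)) t :=
    fun i => (hEval _).comp_hasDerivAt (f := fun s => jet x ν X s) t hjet_t
  have hpdnud_t : ∀ α : Fin k, HasDerivAt (fun s => pdnud L (jet x ν X s) α)
      (L2 (Jp (0, 1)) (0, 0, 0, 0, 0, Pi.single α 1, 0)) t :=
    fun α => (hEval _).comp_hasDerivAt (f := fun s => jet x ν X s) t hjet_t
  have hpdvF : HasFDerivAt (pdv L) (ContinuousLinearMap.pi fun i : Fin 3 =>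
      (ContinuousLinearMap.apply ℝ ℝ (0, 0, Pi.single i 1, 0, 0, 0, 0)).comp L2) jp := by
    refine hasFDerivAt_pi'.2 fun i => ?_
    rw [ContinuousLinearMap.proj_pi]
    exact hEval _
  have hpdnudF : HasFDerivAt (pdnud L) (ContinuousLinearMap.pi fun α : Fin k =>
      (ContinuousLinearMap.apply ℝ ℝ (0, 0, 0, 0, 0, Pi.single α 1, 0)).comp L2) jp := by
    refine hasFDerivAt_pi'.2 fun α => ?_
    rw [ContinuousLinearMap.proj_pi]
    exact hEval _
  have hpdvVec : HasDerivAt (fun s => pdv L (jet x ν X s))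
      (fun i => L2 (Jp (0, 1)) (0, 0, Pi.single i 1, 0, 0, 0, 0)) t :=
    hpdvF.comp_hasDerivAt (f := fun s => jet x ν X s) t hjet_t
  have hpdnudVec : HasDerivAt (fun s => pdnud L (jet x ν X s))
      (fun α => L2 (Jp (0, 1)) (0, 0, 0, 0, 0, Pi.single α 1, 0)) t :=
    hpdnudF.comp_hasDerivAt (f := fun s => jet x ν X s) t hjet_t
  -- Euler–Lagrange, componentwise
  have hELx : ∀ i : Fin 3, L2 (Jp (0, 1)) (0, 0, Pi.single i 1, 0, 0, 0, 0)
      = pdx L jp i - ∑ A : Fin 3, L2 (Jp (Pi.single A 1, 0))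
          (0, 0, 0, Pi.single i (Pi.single A 1), 0, 0, 0) := by
    intro i
    have h1 := hEL1 X hX t ht
    rw [hpdvVec.deriv] at h1
    have h2 := congrFun h1 i
    rw [Pi.sub_apply] at h2
    have h3 : divg (fun Y => pdF L (jet x ν Y t)) X i
        = ∑ A : Fin 3, L2 (Jp (Pi.single A 1, 0))
            (0, 0, 0, Pi.single i (Pi.single A 1), 0, 0, 0) := by
      unfold divg
      refine Finset.sum_congr rfl fun A _ => ?_
      have h4 : HasFDerivAt (fun Y => pdF L (jet x ν Y t) i A)
          (((ContinuousLinearMap.apply ℝ ℝ (0, 0, 0, Pi.single i (Pi.single A 1), 0, 0, 0)).comp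
            L2).comp (Jp.comp inlV)) X := (hEval _).comp (f := fun Y => jet x ν Y t) X hjet_Y
      rw [h4.fderiv]
      simp only [ContinuousLinearMap.comp_apply, ContinuousLinearMap.apply_apply, inlV_apply]
    rw [h3] at h2
    exact h2
  have hELn : ∀ α : Fin k, L2 (Jp (0, 1)) (0, 0, 0, 0, 0, Pi.single α 1, 0)
      = pdnu L jp α - ∑ A : Fin 3, L2 (Jp (Pi.single A 1, 0))
          (0, 0, 0, 0, 0, 0, Pi.single α (Pi.single A 1)) := by
    intro α
    have h1 := hEL2 X hX t ht
    rw [hpdnudVec.deriv] at h1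
    have h2 := congrFun h1 α
    rw [Pi.sub_apply] at h2
    have h3 : divg (fun Y => pdN L (jet x ν Y t)) X α
        = ∑ A : Fin 3, L2 (Jp (Pi.single A 1, 0))
            (0, 0, 0, 0, 0, 0, Pi.single α (Pi.single A 1)) := by
      unfold divg
      refine Finset.sum_congr rfl fun A _ => ?_
      have h4 : HasFDerivAt (fun Y => pdN L (jet x ν Y t) α A)
          (((ContinuousLinearMap.apply ℝ ℝ (0, 0, 0, 0, 0, 0, Pi.single α (Pi.single A 1))).comp
            L2).comp (Jp.comp inlV)) X := (hEval _).comp (f := fun Y => jet x ν Y t) X hjet_Y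
      rw [h4.fderiv]
      simp only [ContinuousLinearMap.comp_apply, ContinuousLinearMap.apply_apply, inlV_apply]
    rw [h3] at h2
    exact h2
  -- LHS
  have hLHS : HasDerivAt (fun s =>
        (∑ i : Fin 3, gradPl x X s i B * pdv L (jet x ν X s) i) +
        (∑ α : Fin k, gradOp ν X s α B * pdnud L (jet x ν X s) α))
      ((∑ i : Fin 3, (F2 (0, 1) (Pi.single B 1, 0) i * pdv L jp i
          + gradPl x X t i B * (L2 (Jp (0, 1)) (0, 0, Pi.single i 1, 0, 0, 0, 0))))
       + ∑ α : Fin k, (G2 (0, 1) (Pi.single B 1, 0) α * pdnud L jp α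
          + gradOp ν X t α B * (L2 (Jp (0, 1)) (0, 0, 0, 0, 0, Pi.single α 1, 0)))) t :=
    (HasDerivAt.fun_sum fun i _ => (hF_t i).fun_mul (hpdv_t i)).fun_add
      (HasDerivAt.fun_sum fun α _ => (hN_t α).fun_mul (hpdnud_t α))
  rw [hLHS.deriv]
  -- RHS: evaluate the fderiv of the Eshelby tensor row
  have hRD : ∀ A : Fin 3, fderiv ℝ (fun Y =>
        L (jet x ν Y t) * (if B = A then (1:ℝ) else 0) -
        (∑ i : Fin 3, gradPl x Y t i B * pdF L (jet x ν Y t) i A) -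
        (∑ α : Fin k, gradOp ν Y t α B * pdN L (jet x ν Y t) α A)) X (Pi.single A 1)
      = (if B = A then (1:ℝ) else 0) * (fderiv ℝ L jp (Jp (Pi.single A 1, 0)))
        - (∑ i : Fin 3, (gradPl x X t i B * L2 (Jp (Pi.single A 1, 0))
              (0, 0, 0, Pi.single i (Pi.single A 1), 0, 0, 0)
            + pdF L jp i A * F2 (Pi.single A 1, 0) (Pi.single B 1, 0) i))
        - (∑ α : Fin k, (gradOp ν X t α B * L2 (Jp (Pi.single A 1, 0))
              (0, 0, 0, 0, 0, 0, Pi.single α (Pi.single A 1))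
            + pdN L jp α A * G2 (Pi.single A 1, 0) (Pi.single B 1, 0) α)) := by
    intro A
    have hLf : HasFDerivAt (fun Y => L (jet x ν Y t)) ((fderiv ℝ L jp).comp (Jp.comp inlV)) X :=
      (hLd jp).comp (f := fun Y => jet x ν Y t) X hjet_Y
    have h0 : HasFDerivAt (fun Y =>
        L (jet x ν Y t) * (if B = A then (1:ℝ) else 0) -
        (∑ i : Fin 3, gradPl x Y t i B * pdF L (jet x ν Y t) i A) -
        (∑ α : Fin k, gradOp ν Y t α B * pdN L (jet x ν Y t) α A))
        ((if B = A then (1:ℝ) else 0) • ((fderiv ℝ L jp).comp (Jp.comp inlV))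
         - (∑ i : Fin 3, (gradPl x X t i B •
              (((ContinuousLinearMap.apply ℝ ℝ (0, 0, 0, Pi.single i (Pi.single A 1), 0, 0, 0)).comp
                L2).comp (Jp.comp inlV))
            + pdF L jp i A • (((ContinuousLinearMap.proj i).comp
                (ContinuousLinearMap.apply ℝ V3 ((Pi.single B 1 : V3), (0:ℝ)))).comp (F2.comp inlV))))
         - (∑ α : Fin k, (gradOp ν X t α B •
              (((ContinuousLinearMap.apply ℝ ℝ (0, 0, 0, 0, 0, 0, Pi.single α (Pi.single A 1))).comp
                L2).comp (Jp.comp inlV))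
            + pdN L jp α A • (((ContinuousLinearMap.proj α).comp
                (ContinuousLinearMap.apply ℝ (Fin k → ℝ) ((Pi.single B 1 : V3), (0:ℝ)))).comp
                  (G2.comp inlV))))) X :=
      ((hLf.mul_const _).fun_sub (HasFDerivAt.fun_sum fun i _ =>
          (hF_Y i).fun_mul ((hEval _).comp (f := fun Y => jet x ν Y t) X hjet_Y))).fun_sub
        (HasFDerivAt.fun_sum fun α _ => (hN_Y α).fun_mul ((hEval _).comp (f := fun Y => jet x ν Y t) X hjet_Y))
    rw [h0.fderiv]
    simp only [ContinuousLinearMap.sub_apply, ContinuousLinearMap.add_apply,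
      ContinuousLinearMap.smul_apply, ContinuousLinearMap.coe_sum', Finset.sum_apply,
      ContinuousLinearMap.comp_apply, inlV_apply, ContinuousLinearMap.apply_apply,
      ContinuousLinearMap.proj_apply, smul_eq_mul]
  simp only [hRD]
  -- decompose the full spatial derivative of L along the jet
  have hW : fderiv ℝ L jp (Jp (Pi.single B 1, 0))
      = (∑ A : Fin 3, (Pi.single B 1 : V3) A * pdX L jp A)
      + (∑ i : Fin 3, fderiv ℝ (fun p : V3 × ℝ => x p.1 p.2) (X, t) (Pi.single B 1, 0) i * pdx L jp i)
      + (∑ i : Fin 3, F2 (Pi.single B 1, 0) (0, 1) i * pdv L jp i)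
      + (∑ i : Fin 3, ∑ A : Fin 3, F2 (Pi.single B 1, 0) (Pi.single A 1, 0) i * pdF L jp i A)
      + (∑ α : Fin k, fderiv ℝ (fun p : V3 × ℝ => ν p.1 p.2) (X, t) (Pi.single B 1, 0) α * pdnu L jp α)
      + (∑ α : Fin k, G2 (Pi.single B 1, 0) (0, 1) α * pdnud L jp α)
      + (∑ α : Fin k, ∑ A : Fin 3, G2 (Pi.single B 1, 0) (Pi.single A 1, 0) α * pdN L jp α A) := by
    have h := arg_decomp (fderiv ℝ L jp) (Jp (Pi.single B 1, 0))
    rw [hJpdef] at h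
    simp only [Jder_apply] at h
    exact h
  have hFB : ∀ i A, fderiv ℝ (fun p : V3 × ℝ => x p.1 p.2) (X, t) (Pi.single A 1, 0) i
      = gradPl x X t i A :=
    fun i A => (congrFun (congrFun (gradPl_eq hU hx hp) i) A).symm
  have hNB : ∀ α A, fderiv ℝ (fun p : V3 × ℝ => ν p.1 p.2) (X, t) (Pi.single A 1, 0) α
      = gradOp ν X t α A :=
    fun α A => (congrFun (congrFun (gradOp_eq hU hν hp) α) A).symm
  have hsymF : ∀ (w : V3 × ℝ) i, F2 (Pi.single B 1, 0) w i = F2 w (Pi.single B 1, 0) i :=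
    fun w i => congrFun (hsymm hU hx hp _ w) i
  have hsymG : ∀ (w : V3 × ℝ) α, G2 (Pi.single B 1, 0) w α = G2 w (Pi.single B 1, 0) α :=
    fun w α => congrFun (hsymm hU hν hp _ w) α
  simp only [hELx, hELn]
  rw [Finset.sum_sub_distrib, Finset.sum_sub_distrib]
  have hite : (∑ A : Fin 3, (if B = A then (1:ℝ) else 0) * (fderiv ℝ L jp (Jp (Pi.single A 1, 0))))
      = fderiv ℝ L jp (Jp (Pi.single B 1, 0)) := by
    simp
  rw [hite, hW]
  have hsingle : (∑ A : Fin 3, (Pi.single B 1 : V3) A * pdX L jp A) = pdX L jp B := by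
    simp [Pi.single_apply]
  rw [hsingle]
  simp only [hFB, hNB, hsymF, hsymG]
  simp only [mul_sub, Finset.mul_sum, Finset.sum_add_distrib, Finset.sum_sub_distrib]
  rw [show (∑ A : Fin 3, ∑ i : Fin 3, gradPl x X t i B * L2 (Jp (Pi.single A 1, 0))
        (0, 0, 0, Pi.single i (Pi.single A 1), 0, 0, 0))
      = ∑ i : Fin 3, ∑ A : Fin 3, gradPl x X t i B * L2 (Jp (Pi.single A 1, 0))
        (0, 0, 0, Pi.single i (Pi.single A 1), 0, 0, 0) from Finset.sum_comm]
  rw [show (∑ A : Fin 3, ∑ i : Fin 3, pdF L jp i A * F2 (Pi.single A 1, 0) (Pi.single B 1, 0) i)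
      = ∑ i : Fin 3, ∑ A : Fin 3, F2 (Pi.single A 1, 0) (Pi.single B 1, 0) i * pdF L jp i A from by
    rw [Finset.sum_comm]
    exact Finset.sum_congr rfl fun i _ => Finset.sum_congr rfl fun A _ => mul_comm _ _]
  rw [show (∑ A : Fin 3, ∑ α : Fin k, gradOp ν X t α B * L2 (Jp (Pi.single A 1, 0))
        (0, 0, 0, 0, 0, 0, Pi.single α (Pi.single A 1)))
      = ∑ α : Fin k, ∑ A : Fin 3, gradOp ν X t α B * L2 (Jp (Pi.single A 1, 0))
        (0, 0, 0, 0, 0, 0, Pi.single α (Pi.single A 1)) from Finset.sum_comm]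
  rw [show (∑ A : Fin 3, ∑ α : Fin k, pdN L jp α A * G2 (Pi.single A 1, 0) (Pi.single B 1, 0) α)
      = ∑ α : Fin k, ∑ A : Fin 3, G2 (Pi.single A 1, 0) (Pi.single B 1, 0) α * pdN L jp α A from by
    rw [Finset.sum_comm]
    exact Finset.sum_congr rfl fun α _ => Finset.sum_congr rfl fun A _ => mul_comm _ _]
  abel
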